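/- Let q ≥ 1 and m ≥ 2q, and let u_0 < u_1 < … < u_{m+q} be a strictly increasing knot vector satisfying Δu_j = Δu_{j+m−q} for all j = 0, …, 2q−1, where Δu_j := u_{j+1} − u_j. Let β ∈ ℝ, and for 0 ≤ i < q define the complex-valued quasi-periodic combination φ_i(u) := B_i^q(u) + e^{iβ}·B_{i+m−q}^q(u) (with e^{iβ} = exp(√−1·β) ∈ ℂ). Then φ_i satisfies the quasi-periodic relation φ_i(u_m) = e^{iβ}·φ_i(u_q); indeed B_i^q(u_m) = 0, B_{i+m−q}^q(u_q) = 0, and B_{i+m−q}^q(u_m) = B_i^q(u_q). -/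
import Mathlib


open Complex

/-- The B-spline functions of degree `q` for the knot sequence `u`, defined by the
Cox–de Boor recursion. `bspline u q i` is `B_i^q`. Fractions with zero denominator
are `0` (Lean's convention `x / 0 = 0`). -/
noncomputable def bspline (u : ℕ → ℝ) : ℕ → ℕ → ℝ → ℝ
  | 0, i, x => if u i ≤ x ∧ x < u (i + 1) then 1 else 0
  | q + 1, i, x =>
      (x - u i) / (u (i + q + 1) - u i) * bspline u q i x +
      (u (i + q + 2) - x) / (u (i + q + 2) - u (i + 1)) * bspline u q (i + 1) x

lemma bspline_eq_zero (u : ℕ → ℝ) (q : ℕ) : ∀ (i : ℕ) (x : ℝ),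
    (∀ j, i ≤ j → j ≤ i + q → ¬(u j ≤ x ∧ x < u (j + 1))) →
    bspline u q i x = 0 := by
  induction q with
  | zero =>
    intro i x h
    simp only [bspline]
    rw [if_neg (h i le_rfl (by omega))]
  | succ q ih =>
    intro i x h
    simp only [bspline]
    rw [ih i x (fun j h1 h2 => h j h1 (by omega)),
        ih (i + 1) x (fun j h1 h2 => h j (by omega) (by omega))]
    ring

lemma bspline_shift (u : ℕ → ℝ) (c : ℝ) (k : ℕ) (q : ℕ) :
    ∀ (i : ℕ) (x : ℝ), (∀ j, i ≤ j → j ≤ i + q + 1 → u (j + k) = u j + c) →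
    bspline u q (i + k) (x + c) = bspline u q i x := by
  induction q with
  | zero =>
    intro i x h
    simp only [bspline]
    rw [h i le_rfl (by omega), show i + k + 1 = (i + 1) + k by ring,
        h (i + 1) (by omega) (by omega)]
    simp [add_le_add_iff_right, add_lt_add_iff_right]
  | succ q ih =>
    intro i x h
    simp only [bspline]
    rw [show i + k + q + 1 = (i + q + 1) + k by ring,
        show i + k + q + 2 = (i + q + 2) + k by ring,
        show i + k + 1 = (i + 1) + k by ring,
        h i le_rfl (by omega), h (i + q + 1) (by omega) (by omega),
        h (i + q + 2) (by omega) (by omega), h (i + 1) (by omega) (by omega),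
        ih i x (fun j h1 h2 => h j h1 (by omega)),
        ih (i + 1) x (fun j h1 h2 => h j (by omega) (by omega))]
    ring_nf

lemma bspline_eq_zero_left (u : ℕ → ℝ) (q i : ℕ) (x : ℝ) (hq : 1 ≤ q)
    (h0 : x ≤ u i) (h : ∀ j, i < j → j ≤ i + q + 1 → x < u j) :
    bspline u q i x = 0 := by
  obtain ⟨q', rfl⟩ : ∃ q', q = q' + 1 := ⟨q - 1, by omega⟩
  simp only [bspline]
  have h2 : bspline u q' (i + 1) x = 0 := by
    apply bspline_eq_zero
    intro j hj1 hj2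
    have := h j (by omega) (by omega)
    push_neg
    intro hle
    linarith
  rcases eq_or_lt_of_le h0 with heq | hlt
  · rw [h2, ← heq]; ring
  · have h1 : bspline u q' i x = 0 := by
      apply bspline_eq_zero
      intro j hj1 hj2
      push_neg
      intro hle
      rcases eq_or_lt_of_le hj1 with rfl | hj
      · linarith
      · exact absurd hle (not_le.2 (h j hj (by omega)))
    rw [h1, h2]; ring

lemma ustrict (m q : ℕ) (u : ℕ → ℝ) (hmono : ∀ j < m + q, u j < u (j + 1)) :
    ∀ a b, a < b → b ≤ m + q → u a < u b := by
  intro a b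
  induction b with
  | zero => omega
  | succ b ih =>
    intro hab hb
    rcases Nat.lt_or_ge a b with h | h
    · exact lt_trans (ih h (by omega)) (hmono b (by omega))
    · have : a = b := by omega
      subst this; exact hmono a (by omega)

lemma ule (m q : ℕ) (u : ℕ → ℝ) (hmono : ∀ j < m + q, u j < u (j + 1)) :
    ∀ a b, a ≤ b → b ≤ m + q → u a ≤ u b := by
  intro a b hab hb
  rcases eq_or_lt_of_le hab with rfl | h
  · exact le_rfl
  · exact le_of_lt (ustrict m q u hmono a b h hb)

/-- Quasi-periodicity of the combined basis function
`φ_i(u) = B_i^q(u) + e^{iβ}·B_{i+m−q}^q(u)` at the two ends `u_q` and `u_m` of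
the parameter domain (scalar content of the quasi-periodic vector basis `Mᵖ`). -/
theorem quasi_periodic_bspline_combination (q m : ℕ) (hq : 1 ≤ q) (hm : 2 * q ≤ m)
    (u : ℕ → ℝ) (hmono : ∀ j < m + q, u j < u (j + 1))
    (hequi : ∀ j < 2 * q, u (j + 1) - u j = u (j + (m - q) + 1) - u (j + (m - q)))
    (β : ℝ) (φ : ℕ → ℝ → ℂ)
    (hφ : φ = fun i s =>
      (bspline u q i s : ℂ) + Complex.exp (Complex.I * β) * (bspline u q (i + (m - q)) s : ℂ)) :
    ∀ i < q,
      φ i (u m) = Complex.exp (Complex.I * β) * φ i (u q) ∧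
      bspline u q i (u m) = 0 ∧
      bspline u q (i + (m - q)) (u q) = 0 ∧
      bspline u q (i + (m - q)) (u m) = bspline u q i (u q) := by
  intro i hi
  set c := u (m - q) - u 0 with hc
  have hshift : ∀ j, j ≤ 2 * q → u (j + (m - q)) = u j + c := by
    intro j
    induction j with
    | zero => intro _; simp [hc]
    | succ j ih =>
      intro hj
      have h1 := hequi j (by omega)
      have h2 := ih (by omega)
      have h3 : j + (m - q) + 1 = j + 1 + (m - q) := by ring
      rw [h3] at h1
      linarith
  have hum : u m = u q + c := by
    have := hshift q (by omega)
    rwa [show q + (m - q) = m by omega] at this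
  have hB1 : bspline u q i (u m) = 0 := by
    apply bspline_eq_zero
    intro j hj1 hj2
    push_neg
    intro _
    rcases Nat.lt_or_ge (j + 1) m with h | h
    · exact le_of_lt (ustrict m q u hmono (j + 1) m h (by omega))
    · have : j + 1 = m := by omega
      rw [this]
  have hB2 : bspline u q (i + (m - q)) (u q) = 0 := by
    apply bspline_eq_zero_left u q _ _ hq
    · exact ule m q u hmono q (i + (m - q)) (by omega) (by omega)
    · intro j hj1 hj2
      exact ustrict m q u hmono q j (by omega) (by omega)
  have hB3 : bspline u q (i + (m - q)) (u m) = bspline u q i (u q) := by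
    rw [hum]
    exact bspline_shift u c (m - q) q i (u q) (fun j hj1 hj2 => hshift j (by omega))
  refine ⟨?_, hB1, hB2, hB3⟩
  rw [hφ]
  simp only
  rw [hB1, hB2, hB3]
  push_cast
  ring
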